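/- arXiv:2109.11403 — 4 statements merged into one kernel-verified Lean document; each statement's English description precedes it below -/
import Mathlib

section
/- Fix T > 0, d ∈ ℕ, and for i = 1,…,d constants θ_i > 0, ρ_i > 0, σ_i ∈ ℝ and m_i ≥ 0. Set κ_i = ((ρ_i − √θ_i)/(ρ_i + √θ_i)) e^{−2T/√θ_i} and a_i(t) = √θ_i (1 + κ_i e^{2t/√θ_i})/(1 − κ_i e^{2t/√θ_i}). Define b(t) = Σ_{i=1}^d √θ_i (σ_i² + m_i) [ (T − t) + √θ_i · log( (1 − κ_i e^{2t/√θ_i}) / (1 − κ_i e^{2T/√θ_i}) ) ] for t ∈ [0, T]. Then b is differentiable on [0, T] with b′(t) = − Σ_{i=1}^d (σ_i² + m_i) a_i(t) for all t ∈ [0, T], and b(T) = 0. -/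
open scoped BigOperators

/-- The explicit function
`b(t) = Σᵢ √θᵢ (σᵢ² + mᵢ) [(T − t) + √θᵢ log((1 − κᵢ e^{2t/√θᵢ})/(1 − κᵢ e^{2T/√θᵢ}))]`
is differentiable on `[0, T]` with `b′(t) = −Σᵢ (σᵢ² + mᵢ) aᵢ(t)` and `b(T) = 0`,
where `aᵢ(t) = √θᵢ (1 + κᵢ e^{2t/√θᵢ})/(1 − κᵢ e^{2t/√θᵢ})` and
`κᵢ = ((ρᵢ − √θᵢ)/(ρᵢ + √θᵢ)) e^{−2T/√θᵢ}`. -/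
theorem stmt_5 {T : ℝ} (hT : 0 < T) {d : ℕ} (θ ρ σ m : Fin d → ℝ)
    (hθ : ∀ i, 0 < θ i) (hρ : ∀ i, 0 < ρ i) (hm : ∀ i, 0 ≤ m i) :
    let κ : Fin d → ℝ := fun i =>
      (ρ i - Real.sqrt (θ i)) / (ρ i + Real.sqrt (θ i)) * Real.exp (-2 * T / Real.sqrt (θ i))
    let a : Fin d → ℝ → ℝ := fun i t =>
      Real.sqrt (θ i) * (1 + κ i * Real.exp (2 * t / Real.sqrt (θ i))) /
        (1 - κ i * Real.exp (2 * t / Real.sqrt (θ i)))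
    let b : ℝ → ℝ := fun t => ∑ i, Real.sqrt (θ i) * ((σ i) ^ 2 + m i) *
      ((T - t) + Real.sqrt (θ i) *
        Real.log ((1 - κ i * Real.exp (2 * t / Real.sqrt (θ i))) /
          (1 - κ i * Real.exp (2 * T / Real.sqrt (θ i)))))
    (∀ t ∈ Set.Icc (0 : ℝ) T,
        HasDerivAt b (-∑ i, ((σ i) ^ 2 + m i) * a i t) t) ∧ b T = 0 := by
  intro κ a b
  -- positivity of the denominators on [0, T]
  have key : ∀ i, ∀ t ∈ Set.Icc (0 : ℝ) T,
      0 < 1 - κ i * Real.exp (2 * t / Real.sqrt (θ i)) := by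
    intro i t ht
    set s := Real.sqrt (θ i) with hsdef
    have hs : 0 < s := Real.sqrt_pos.mpr (hθ i)
    have hρs : 0 < ρ i + s := add_pos (hρ i) hs
    have h1 : κ i * Real.exp (2 * t / s)
        = (ρ i - s) / (ρ i + s) * Real.exp ((2 * t - 2 * T) / s) := by
      show (ρ i - s) / (ρ i + s) * Real.exp (-2 * T / s) * Real.exp (2 * t / s) = _
      rw [mul_assoc, ← Real.exp_add]
      congr 1
      field_simp
      ring
    have hq : (ρ i - s) / (ρ i + s) < 1 := by
      rw [div_lt_one hρs]; linarith
    have hE1 : Real.exp ((2 * t - 2 * T) / s) ≤ 1 := by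
      rw [Real.exp_le_one_iff]
      apply div_nonpos_of_nonpos_of_nonneg
      · linarith [ht.2]
      · exact hs.le
    have hE0 : 0 < Real.exp ((2 * t - 2 * T) / s) := Real.exp_pos _
    rw [h1]
    nlinarith [mul_pos (sub_pos.mpr hq) hE0]
  have hTmem : T ∈ Set.Icc (0 : ℝ) T := ⟨hT.le, le_refl T⟩
  constructor
  · intro t ht
    have hderiv : ∀ i : Fin d, HasDerivAt
        (fun t => Real.sqrt (θ i) * ((σ i) ^ 2 + m i) *
          ((T - t) + Real.sqrt (θ i) *
            Real.log ((1 - κ i * Real.exp (2 * t / Real.sqrt (θ i))) /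
              (1 - κ i * Real.exp (2 * T / Real.sqrt (θ i))))))
        (-(((σ i) ^ 2 + m i) * a i t)) t := by
      intro i
      set s := Real.sqrt (θ i) with hsdef
      have hs : 0 < s := Real.sqrt_pos.mpr (hθ i)
      have hDt : 0 < 1 - κ i * Real.exp (2 * t / s) := key i t ht
      have hDT : 0 < 1 - κ i * Real.exp (2 * T / s) := key i T hTmem
      have h1 : HasDerivAt (fun t : ℝ => 2 * t / s) (2 / s) t := by
        simpa using ((hasDerivAt_id t).const_mul 2).div_const s
      have hE : HasDerivAt (fun t : ℝ => Real.exp (2 * t / s))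
          (Real.exp (2 * t / s) * (2 / s)) t := h1.exp
      have hD : HasDerivAt (fun t : ℝ => 1 - κ i * Real.exp (2 * t / s))
          (-(κ i * (Real.exp (2 * t / s) * (2 / s)))) t :=
        (hE.const_mul (κ i)).const_sub 1
      have hu : HasDerivAt
          (fun t : ℝ => (1 - κ i * Real.exp (2 * t / s)) /
            (1 - κ i * Real.exp (2 * T / s)))
          (-(κ i * (Real.exp (2 * t / s) * (2 / s))) /
            (1 - κ i * Real.exp (2 * T / s))) t := hD.div_const _
      have hune : (1 - κ i * Real.exp (2 * t / s)) /
          (1 - κ i * Real.exp (2 * T / s)) ≠ 0 :=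
        ne_of_gt (div_pos hDt hDT)
      have hlog := hu.log hune
      have hlin : HasDerivAt (fun t : ℝ => T - t) (-1) t := by
        simpa using (hasDerivAt_id t).const_sub T
      have htot := ((hlin.add (hlog.const_mul s)).const_mul (s * ((σ i) ^ 2 + m i)))
      convert htot using 1
      show -(((σ i) ^ 2 + m i) * (s * (1 + κ i * Real.exp (2 * t / s)) /
        (1 - κ i * Real.exp (2 * t / s)))) = _
      field_simp
      ring
      all_goals rfl
    have hsum := HasDerivAt.fun_sum (u := Finset.univ)
      (A := fun (i : Fin d) (t : ℝ) => Real.sqrt (θ i) * ((σ i) ^ 2 + m i) *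
        ((T - t) + Real.sqrt (θ i) *
          Real.log ((1 - κ i * Real.exp (2 * t / Real.sqrt (θ i))) /
            (1 - κ i * Real.exp (2 * T / Real.sqrt (θ i))))))
      (fun i _ => hderiv i)
    convert hsum using 1
    rotate_left 2
    rw [← Finset.sum_neg_distrib]
    all_goals rfl
  · apply Finset.sum_eq_zero
    intro i _
    have h := key i T hTmem
    rw [div_self (ne_of_gt h), Real.log_one]
    ring
end

section
/- Fix T > 0, κ > 0, γ > 0 and ᾱ ∈ ℝ. Set a = T + κ/γ, c₁ = −(1/2)ᾱT² + aᾱT, h₂(t) = 2κ/(a − t), and h₁(t) = ( c₁ + (1/2)ᾱ t² − a ᾱ t ) / (a − t) for t ∈ [0,T]. Then h₁ is differentiable on [0,T] with h₁′(t) = −ᾱ + h₁(t) h₂(t)/(2κ) for all t ∈ [0,T], and h₁(T) = 0. -/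
/-- With `a = T + κ/γ`, `c₁ = −½ᾱT² + aᾱT` and `h₂(t) = 2κ/(a−t)`, the function
`h₁(t) = (c₁ + ½ᾱt² − aᾱt)/(a − t)` is differentiable on `[0,T]` with
`h₁′(t) = −ᾱ + h₁(t)h₂(t)/(2κ)` and `h₁(T) = 0`. -/
theorem stmt_12 {T κ γ α : ℝ} (hT : 0 < T) (hκ : 0 < κ) (hγ : 0 < γ) :
    let a : ℝ := T + κ / γ
    let c₁ : ℝ := -(1 / 2) * α * T ^ 2 + a * α * T
    let h₂ : ℝ → ℝ := fun t => 2 * κ / (a - t)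
    let h₁ : ℝ → ℝ := fun t => (c₁ + (1 / 2) * α * t ^ 2 - a * α * t) / (a - t)
    (∀ t ∈ Set.Icc (0 : ℝ) T, HasDerivAt h₁ (-α + h₁ t * h₂ t / (2 * κ)) t)
    ∧ h₁ T = 0 := by
  intro a c₁ h₂ h₁
  have ha : ∀ t ∈ Set.Icc (0 : ℝ) T, 0 < a - t := by
    intro t ht
    have : t ≤ T := ht.2
    have : κ / γ > 0 := div_pos hκ hγ
    simp only [a]; linarith [ht.2]
  constructor
  · intro t ht
    have hat : a - t ≠ 0 := ne_of_gt (ha t ht)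
    have hnum : HasDerivAt (fun t : ℝ => c₁ + (1 / 2) * α * t ^ 2 - a * α * t)
        ((1 / 2) * α * (2 * t) - a * α) t := by
      have h1 : HasDerivAt (fun t : ℝ => t ^ 2) (2 * t) t := by
        simpa using (hasDerivAt_pow 2 t)
      have := ((h1.const_mul ((1 / 2) * α)).const_add c₁).sub
        ((hasDerivAt_id t).const_mul (a * α))
      exact this.congr_deriv (by ring)
    have hden : HasDerivAt (fun t : ℝ => a - t) (-1) t := by
      simpa using (hasDerivAt_id t).const_sub a
    have := hnum.div hden hat
    refine this.congr_deriv ?_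
    simp only [h₁, h₂]
    field_simp
    ring
  · simp only [h₁, c₁]
    have : (-(1 / 2) * α * T ^ 2 + a * α * T + (1 / 2) * α * T ^ 2 - a * α * T) = 0 := by ring
    rw [this, zero_div]
end

section
/- Fix T > 0, κ > 0, γ > 0 and ᾱ ∈ ℝ. Set a = T + κ/γ, c₁ = −(1/2)ᾱT² + aᾱT, h₁(t) = ( c₁ + (1/2)ᾱ t² − a ᾱ t ) / (a − t), and define h₀(t) = (1/(4κ(a − t))) ( −(2/3)ᾱ²a⁴ + (2/3)ᾱ²a³t + 2ᾱa²c₁ + ᾱc₁t² − 2ᾱac₁t − c₁² + (1/12)ᾱ²t⁴ − (1/3)ᾱ²at³ ) for t ∈ [0,T]. Then h₀ is differentiable on [0,T] with h₀′(t) = − h₁(t)²/(4κ) for all t ∈ [0,T], and its terminal value is h₀(T) = − ᾱ²(a − T)³/(6κ) = − ᾱ²(κ/γ)³/(6κ). -/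
/-- With `a = T + κ/γ`, `c₁ = −½ᾱT² + aᾱT` and
`h₁(t) = (c₁ + ½ᾱt² − aᾱt)/(a − t)`, the explicit function
`h₀(t) = (1/(4κ(a−t)))(−⅔ᾱ²a⁴ + ⅔ᾱ²a³t + 2ᾱa²c₁ + ᾱc₁t² − 2ᾱac₁t − c₁² + (1/12)ᾱ²t⁴ − ⅓ᾱ²at³)`
is differentiable on `[0,T]` with `h₀′(t) = −h₁(t)²/(4κ)`, and its terminal value is
`h₀(T) = −ᾱ²(a−T)³/(6κ) = −ᾱ²(κ/γ)³/(6κ)`. -/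
theorem stmt_13 {T κ γ α : ℝ} (hT : 0 < T) (hκ : 0 < κ) (hγ : 0 < γ) :
    let a : ℝ := T + κ / γ
    let c₁ : ℝ := -(1 / 2) * α * T ^ 2 + a * α * T
    let h₁ : ℝ → ℝ := fun t => (c₁ + (1 / 2) * α * t ^ 2 - a * α * t) / (a - t)
    let h₀ : ℝ → ℝ := fun t => (1 / (4 * κ * (a - t))) *
      (-(2 / 3) * α ^ 2 * a ^ 4 + (2 / 3) * α ^ 2 * a ^ 3 * t + 2 * α * a ^ 2 * c₁
        + α * c₁ * t ^ 2 - 2 * α * a * c₁ * t - c₁ ^ 2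
        + (1 / 12) * α ^ 2 * t ^ 4 - (1 / 3) * α ^ 2 * a * t ^ 3)
    (∀ t ∈ Set.Icc (0 : ℝ) T, HasDerivAt h₀ (-(h₁ t) ^ 2 / (4 * κ)) t)
    ∧ h₀ T = -α ^ 2 * (a - T) ^ 3 / (6 * κ)
    ∧ h₀ T = -α ^ 2 * (κ / γ) ^ 3 / (6 * κ) := by
  intro a c₁ h₁ h₀
  have hκγ : 0 < κ / γ := div_pos hκ hγ
  have haT : a - T = κ / γ := by simp [a]
  refine ⟨?_, ?_, ?_⟩
  · intro t ht
    obtain ⟨ht0, htT⟩ := ht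
    have hd : a - t > 0 := by
      have : T < a := by simp only [a]; linarith
      linarith
    have hdne : (4 : ℝ) * κ * (a - t) ≠ 0 := by positivity
    have hdne' : a - t ≠ 0 := ne_of_gt hd
    -- numerator derivative
    have hnum : HasDerivAt (fun t : ℝ => -(2 / 3) * α ^ 2 * a ^ 4 + (2 / 3) * α ^ 2 * a ^ 3 * t
        + 2 * α * a ^ 2 * c₁ + α * c₁ * t ^ 2 - 2 * α * a * c₁ * t - c₁ ^ 2
        + (1 / 12) * α ^ 2 * t ^ 4 - (1 / 3) * α ^ 2 * a * t ^ 3)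
        ((2 / 3) * α ^ 2 * a ^ 3 * 1 + α * c₁ * (2 * t ^ 1) - 2 * α * a * c₁ * 1
          + (1 / 12) * α ^ 2 * (4 * t ^ 3) - (1 / 3) * α ^ 2 * a * (3 * t ^ 2)) t := by
      have h2 := hasDerivAt_pow 2 t
      have h3 := hasDerivAt_pow 3 t
      have h4 := hasDerivAt_pow 4 t
      have hid := hasDerivAt_id t
      have := (((((((hasDerivAt_const t (-(2 / 3) * α ^ 2 * a ^ 4)).add
        (hid.const_mul ((2 / 3) * α ^ 2 * a ^ 3))).add
        (hasDerivAt_const t (2 * α * a ^ 2 * c₁))).add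
        (h2.const_mul (α * c₁))).sub (hid.const_mul (2 * α * a * c₁))).sub
        (hasDerivAt_const t (c₁ ^ 2))).add (h4.const_mul ((1 / 12) * α ^ 2))).sub
        (h3.const_mul ((1 / 3) * α ^ 2 * a))
      convert this using 1
      · rfl
      · rfl
      · funext s; simp only [Pi.add_apply, Pi.sub_apply, id]
      · push_cast; ring
    have hden : HasDerivAt (fun t : ℝ => 4 * κ * (a - t)) (4 * κ * (0 - 1)) t :=
      ((hasDerivAt_const t a).sub (hasDerivAt_id t)).const_mul (4 * κ)
    have hdiv := hnum.div hden hdne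
    have heq : h₀ = fun t : ℝ => (-(2 / 3) * α ^ 2 * a ^ 4 + (2 / 3) * α ^ 2 * a ^ 3 * t
        + 2 * α * a ^ 2 * c₁ + α * c₁ * t ^ 2 - 2 * α * a * c₁ * t - c₁ ^ 2
        + (1 / 12) * α ^ 2 * t ^ 4 - (1 / 3) * α ^ 2 * a * t ^ 3) / (4 * κ * (a - t)) := by
      funext s
      simp only [h₀]
      ring
    rw [heq]
    convert hdiv using 1
    · rfl
    · rfl
    · rfl
    simp only [h₁]
    field_simp
    ring
  · have hdne' : a - T ≠ 0 := by rw [haT]; exact ne_of_gt hκγ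
    simp only [h₀, c₁]
    field_simp
    ring
  · have hdne' : a - T ≠ 0 := by rw [haT]; exact ne_of_gt hκγ
    have : -α ^ 2 * (κ / γ) ^ 3 / (6 * κ) = -α ^ 2 * (a - T) ^ 3 / (6 * κ) := by rw [haT]
    rw [this]
    simp only [h₀, c₁]
    field_simp
    ring
end

section
/- Fix T > 0, κ > 0, γ > 0, λ ≥ 0, μ̄ ∈ ℝ, σ ∈ ℝ, and let η be a Borel probability measure on (0,∞) with finite mean η̄; set ᾱ = μ̄ − λη̄. Suppose h₀, h₁, h₂ : [0,T] → ℝ are differentiable with h₂′ = h₂²/(2κ), h₁′ = −ᾱ + h₁h₂/(2κ), h₀′ = −h₁²/(4κ) on [0,T] and h₂(T) = 2γ, h₁(T) = 0, h₀(T) = 0. Then u(t,q,e) = e + h₀(t) + h₁(t)q − (1/2)h₂(t)q² satisfies, for every (t,q,e) ∈ [0,T] × ℝ × ℝ, the semilinear PIDE u_t + q μ̄ u_e + (1/2)σ²q² u_{ee} + λ ∫₀^∞ [ u(t,q,e − qz) − u(t,q,e) ] η(dz) + (1/(4κ)) u_q²/u_e = 0, together with the terminal condition u(T,q,e) = e −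 γ q². -/
open MeasureTheory

/-- **Explicit solution of the HJB PIDE for the unconstrained insurance problem.**
If `h₂′ = h₂²/(2κ)`, `h₁′ = −ᾱ + h₁h₂/(2κ)`, `h₀′ = −h₁²/(4κ)` on `[0,T]` with
`h₂(T) = 2γ`, `h₁(T) = 0`, `h₀(T) = 0` and `ᾱ = μ̄ − λη̄`, then
`u(t,q,e) = e + h₀(t) + h₁(t)q − ½h₂(t)q²` satisfies the semilinear PIDE
`u_t + qμ̄u_e + ½σ²q²u_{ee} + λ∫(u(t,q,e−qz) − u(t,q,e))η(dz) + (1/(4κ))u_q²/u_e = 0`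
on `[0,T] × ℝ × ℝ`, with terminal condition `u(T,q,e) = e − γq²`. -/
theorem stmt_16 {T κ γ lam μ σ : ℝ} (hT : 0 < T) (hκ : 0 < κ) (hγ : 0 < γ)
    (hlam : 0 ≤ lam)
    (η : Measure ℝ) [IsProbabilityMeasure η] (hη : η (Set.Iic 0) = 0)
    (hmean : Integrable (fun z : ℝ => z) η)
    (h₀ h₁ h₂ : ℝ → ℝ)
    (hd2 : ∀ t ∈ Set.Icc (0 : ℝ) T,
      HasDerivAt h₂ ((h₂ t) ^ 2 / (2 * κ)) t)
    (hd1 : ∀ t ∈ Set.Icc (0 : ℝ) T,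
      HasDerivAt h₁ (-(μ - lam * ∫ z, z ∂η) + h₁ t * h₂ t / (2 * κ)) t)
    (hd0 : ∀ t ∈ Set.Icc (0 : ℝ) T, HasDerivAt h₀ (-(h₁ t) ^ 2 / (4 * κ)) t)
    (hT2 : h₂ T = 2 * γ) (hT1 : h₁ T = 0) (hT0 : h₀ T = 0) :
    ∀ t ∈ Set.Icc (0 : ℝ) T, ∀ q e : ℝ,
      let u : ℝ → ℝ → ℝ → ℝ := fun t q e => e + h₀ t + h₁ t * q - (1 / 2) * h₂ t * q ^ 2
      (deriv (fun s => u s q e) t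
        + q * μ * deriv (fun e' => u t q e') e
        + (1 / 2) * σ ^ 2 * q ^ 2 * iteratedDeriv 2 (fun e' => u t q e') e
        + lam * ∫ z, (u t q (e - q * z) - u t q e) ∂η
        + (1 / (4 * κ)) * (deriv (fun q' => u t q' e) q) ^ 2
            / deriv (fun e' => u t q e') e = 0)
      ∧ u T q e = e - γ * q ^ 2 := by
  intro t ht q e u
  constructor
  · -- time derivative
    have Hs : HasDerivAt (fun s => u s q e)
        ((-(h₁ t) ^ 2 / (4 * κ)) + (-(μ - lam * ∫ z, z ∂η) + h₁ t * h₂ t / (2 * κ)) * q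
          - (1 / 2) * ((h₂ t) ^ 2 / (2 * κ)) * q ^ 2) t := by
      have := ((((hasDerivAt_const t e).add (hd0 t ht)).add ((hd1 t ht).mul_const q)).sub
          (((hd2 t ht).const_mul (1 / 2)).mul_const (q ^ 2)))
      exact this.congr_deriv (by ring)
    have He : HasDerivAt (fun e' => u t q e') 1 e := by
      exact (((hasDerivAt_id e).add_const (h₀ t)).add_const (h₁ t * q)).sub_const
          ((1 / 2) * h₂ t * q ^ 2)
    have hde : deriv (fun e' => u t q e') e = 1 := He.deriv
    have hdee : iteratedDeriv 2 (fun e' => u t q e') e = 0 := by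
      have : deriv (fun e' => u t q e') = fun _ => 1 := by
        funext x
        exact HasDerivAt.deriv
          ((((hasDerivAt_id x).add_const (h₀ t)).add_const (h₁ t * q)).sub_const
              ((1 / 2) * h₂ t * q ^ 2))
      rw [iteratedDeriv_succ, iteratedDeriv_one, this]
      simp
    have hdq : deriv (fun q' => u t q' e) q = h₁ t - h₂ t * q := by
      have : HasDerivAt (fun q' => u t q' e) (h₁ t - h₂ t * q) q := by
        have h1 : HasDerivAt (fun q' : ℝ => h₁ t * q') (h₁ t) q := by
          simpa using (hasDerivAt_id q).const_mul (h₁ t)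
        have h2 : HasDerivAt (fun q' : ℝ => (1 / 2) * h₂ t * q' ^ 2)
            ((1 / 2) * h₂ t * (2 * q)) q := by
          simpa using ((hasDerivAt_pow 2 q).const_mul ((1 / 2) * h₂ t))
        have := (((hasDerivAt_const q (e + h₀ t)).add h1).sub h2)
        exact this.congr_deriv (by ring)
      exact this.deriv
    have hint : (∫ z, (u t q (e - q * z) - u t q e) ∂η) = -q * ∫ z, z ∂η := by
      have : (fun z => u t q (e - q * z) - u t q e) = fun z => -q * z := by
        funext z; simp only [u]; ring
      rw [this, integral_const_mul]
    rw [Hs.deriv, hde, hdee, hdq, hint]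
    field_simp
    ring
  · simp only [u, hT0, hT1, hT2]; ring
end
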